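/- Let (A,·) be a finite-dimensional Zinbiel algebra and ϖ a nondegenerate symmetric bilinear form on A with basis {eᵢ} and ϖ-dual basis {fᵢ}. Then r = Σᵢ eᵢ⊗fᵢ is a symmetric solution of the Zinbiel Yang–Baxter equation if and only if ϖ satisfies ϖ(a₁·a₂, a₃) − ϖ(a₁·a₃ + a₃·a₁, a₂) + ϖ(a₃·a₂, a₁) = 0 for all a₁,a₂,a₃ (i.e., (A,·,ϖ) is quasi-Frobenius). -/

import Mathlib

open TensorProduct

private lemma sum_ite_const' {α M : Type*} [Fintype α] [AddCommMonoid M]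
    (c : Prop) [Decidable c] (g : α → M) :
    ∑ x : α, (if c then g x else 0) = if c then ∑ x : α, g x else 0 := by
  split <;> simp

/-- For a Zinbiel algebra with a nondegenerate symmetric bilinear form ϖ,
`r = Σᵢ eᵢ⊗fᵢ` is a symmetric solution of the Zinbiel Yang–Baxter equation iff
`(A,·,ϖ)` is a quasi-Frobenius Zinbiel algebra. -/
theorem ZYBE_iff_quasiFrobenius (K A : Type*) [Field K] [CharZero K]
    [AddCommGroup A] [Module K A] [FiniteDimensional K A]
    (mul : A →ₗ[K] A →ₗ[K] A)
    (hz : ∀ a₁ a₂ a₃ : A,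
      mul a₁ (mul a₂ a₃) = mul (mul a₁ a₂) a₃ + mul (mul a₂ a₁) a₃)
    (ϖ : A →ₗ[K] A →ₗ[K] K)
    (hsym : ∀ a b : A, ϖ a b = ϖ b a)
    (hnd : ∀ a : A, (∀ b : A, ϖ a b = 0) → a = 0)
    (n : ℕ) (e : Module.Basis (Fin n) K A) (f : Fin n → A)
    (hdual : ∀ i j : Fin n, ϖ (f j) (e i) = if i = j then 1 else 0) :
    ((∑ i : Fin n, (e i : A) ⊗ₜ[K] f i = ∑ i : Fin n, f i ⊗ₜ[K] (e i : A)) ∧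
      ∑ i : Fin n, ∑ j : Fin n,
        (((mul (e i) (f j)) ⊗ₜ[K] (e j : A)) ⊗ₜ[K] f i
          + ((mul (f j) (e i)) ⊗ₜ[K] (e j : A)) ⊗ₜ[K] f i
          + ((e i : A) ⊗ₜ[K] (mul (f i) (e j))) ⊗ₜ[K] f j
          + ((e i : A) ⊗ₜ[K] (mul (e j) (f i))) ⊗ₜ[K] f j
          - ((e i : A) ⊗ₜ[K] (e j : A)) ⊗ₜ[K] (mul (f i) (f j))
          - ((e i : A) ⊗ₜ[K] (e j : A)) ⊗ₜ[K] (mul (f j) (f i))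
          - ((mul (e i) (e j)) ⊗ₜ[K] f j) ⊗ₜ[K] f i
          - (f j ⊗ₜ[K] (mul (e i) (e j))) ⊗ₜ[K] f i) = 0) ↔
    (∀ a₁ a₂ a₃ : A,
      ϖ (mul a₁ a₂) a₃ - ϖ (mul a₁ a₃ + mul a₃ a₁) a₂ + ϖ (mul a₃ a₂) a₁ = 0) := by
  -- coordinates via the dual family
  have hcoord : ∀ (x : A) (k : Fin n), e.repr x k = ϖ (f k) x := by
    intro x k
    conv_rhs => rw [← e.sum_repr x]
    rw [map_sum]
    simp [hdual, Finset.sum_ite_eq', smul_eq_mul]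
  -- expansion in the basis e
  have hb : ∀ x : A, ∑ i, ϖ (f i) x • e i = x := by
    intro x; simp only [← hcoord]; exact e.sum_repr x
  -- expansion in the dual family f
  have hf : ∀ x : A, ∑ i, ϖ (e i) x • f i = x := by
    intro x
    rw [← sub_eq_zero]
    apply hnd
    have h0 : ∀ j : Fin n, ϖ (∑ i, ϖ (e i) x • f i - x) (e j) = 0 := by
      intro j
      simp only [map_sub, map_sum, LinearMap.coe_sum, Finset.sum_apply,
        map_smul, LinearMap.smul_apply, smul_eq_mul, hdual, LinearMap.sub_apply,
        mul_ite, mul_one, mul_zero, Finset.sum_ite_eq, Finset.mem_univ, if_true]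
      rw [hsym x (e j)]
      ring
    intro b
    conv_lhs => rw [← hb b, map_sum (ϖ _)]
    simp only [map_smul, smul_eq_mul, h0, mul_zero, Finset.sum_const_zero]
  -- contraction lemmas
  have hcL : ∀ (x y : A) (k : Fin n),
      ∑ i, ϖ (f k) (f i) * ϖ x (mul (e i) y) = ϖ x (mul (f k) y) := by
    intro x y k
    conv_rhs => rw [← hb (f k)]
    rw [map_sum mul, LinearMap.coe_sum, Finset.sum_apply, map_sum (ϖ x)]
    refine Finset.sum_congr rfl fun i _ => ?_
    rw [map_smul, LinearMap.smul_apply, map_smul, smul_eq_mul, hsym (f i) (f k)]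
  have hcR : ∀ (x y : A) (k : Fin n),
      ∑ i, ϖ (f k) (f i) * ϖ x (mul y (e i)) = ϖ x (mul y (f k)) := by
    intro x y k
    conv_rhs => rw [← hb (f k)]
    rw [map_sum (mul y), map_sum (ϖ x)]
    refine Finset.sum_congr rfl fun i _ => ?_
    rw [map_smul, map_smul, smul_eq_mul, hsym (f i) (f k)]
  -- a linear functional vanishing on the f's vanishes
  have vanish : ∀ (M : A →ₗ[K] K), (∀ i, M (f i) = 0) → ∀ x, M x = 0 := by
    intro M hM x
    conv_lhs => rw [← hf x, map_sum M]
    simp [hM]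
  -- the representation of the big tensor sum
  have hrepr : ∀ (k l m : Fin n),
      (((e.tensorProduct e).tensorProduct e).repr (∑ i : Fin n, ∑ j : Fin n,
        (((mul (e i) (f j)) ⊗ₜ[K] (e j : A)) ⊗ₜ[K] f i
          + ((mul (f j) (e i)) ⊗ₜ[K] (e j : A)) ⊗ₜ[K] f i
          + ((e i : A) ⊗ₜ[K] (mul (f i) (e j))) ⊗ₜ[K] f j
          + ((e i : A) ⊗ₜ[K] (mul (e j) (f i))) ⊗ₜ[K] f j
          - ((e i : A) ⊗ₜ[K] (e j : A)) ⊗ₜ[K] (mul (f i) (f j))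
          - ((e i : A) ⊗ₜ[K] (e j : A)) ⊗ₜ[K] (mul (f j) (f i))
          - ((mul (e i) (e j)) ⊗ₜ[K] f j) ⊗ₜ[K] f i
          - (f j ⊗ₜ[K] (mul (e i) (e j))) ⊗ₜ[K] f i)) ((k,l),m))
      = ϖ (f k) (mul (f l) (f m)) + ϖ (f l) (mul (f k) (f m))
        - ϖ (f m) (mul (f k) (f l)) - ϖ (f m) (mul (f l) (f k)) := by
    intro k l m
    simp only [map_sum, map_add, map_sub, Finsupp.coe_finset_sum, Finset.sum_apply,
      Finsupp.add_apply, Finsupp.sub_apply, Module.Basis.tensorProduct_repr_tmul_apply,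
      smul_eq_mul, hcoord, hdual, mul_ite, ite_mul, one_mul, mul_one, zero_mul, mul_zero,
      Finset.sum_add_distrib, Finset.sum_sub_distrib, sum_ite_const',
      Finset.sum_ite_eq, Finset.sum_ite_eq', Finset.sum_const_zero,
      Finset.mem_univ, if_true]
    rw [hcL (f k) (f l) m, hcR (f k) (f l) m, hcR (f l) (f k) m, hcL (f l) (f k) m]
    have H7 : ∑ x : Fin n, ∑ x1 : Fin n,
        ϖ (f m) (f x) * (ϖ (f l) (f x1) * ϖ (f k) (mul (e x) (e x1)))
        = ϖ (f k) (mul (f m) (f l)) := by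
      simp only [← Finset.mul_sum, hcR (f k) _ l]
      exact hcL (f k) (f l) m
    have H8 : ∑ x : Fin n, ∑ x1 : Fin n,
        ϖ (f m) (f x) * (ϖ (f l) (mul (e x) (e x1)) * ϖ (f k) (f x1))
        = ϖ (f l) (mul (f m) (f k)) := by
      have hre : ∀ x x1 : Fin n,
          ϖ (f m) (f x) * (ϖ (f l) (mul (e x) (e x1)) * ϖ (f k) (f x1))
          = ϖ (f m) (f x) * (ϖ (f k) (f x1) * ϖ (f l) (mul (e x) (e x1))) := by
        intro x x1; ring
      simp only [hre, ← Finset.mul_sum, hcR (f l) _ k]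
      exact hcL (f l) (f k) m
    rw [H7, H8]
    ring
  constructor
  · rintro ⟨-, hT⟩
    -- coefficients vanish
    have hc : ∀ k l m : Fin n,
        ϖ (f k) (mul (f l) (f m)) + ϖ (f l) (mul (f k) (f m))
        - ϖ (f m) (mul (f k) (f l)) - ϖ (f m) (mul (f l) (f k)) = 0 := by
      intro k l m
      rw [← hrepr k l m, hT]
      simp
    -- quasi-Frobenius identity on f-triples
    have q0 : ∀ l m k : Fin n,
        ϖ (mul (f l) (f m)) (f k) - ϖ (mul (f l) (f k) + mul (f k) (f l)) (f m)
          + ϖ (mul (f k) (f m)) (f l) = 0 := by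
      intro l m k
      have h := hc k l m
      rw [map_add, LinearMap.add_apply]
      linear_combination h - hsym (f k) (mul (f l) (f m)) - hsym (f l) (mul (f k) (f m))
        + hsym (f m) (mul (f k) (f l)) + hsym (f m) (mul (f l) (f k))
    -- generalize the third argument
    have q1 : ∀ (l m : Fin n) (c : A),
        ϖ (mul (f l) (f m)) c - ϖ (mul (f l) c + mul c (f l)) (f m)
          + ϖ (mul c (f m)) (f l) = 0 := by
      intro l m c
      have := vanish (ϖ (mul (f l) (f m))
          - (ϖ.flip (f m)).comp (mul (f l) + mul.flip (f l))
          + (ϖ.flip (f l)).comp (mul.flip (f m)))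
        (fun k => by
          have := q0 l m k
          simpa [LinearMap.sub_apply, LinearMap.add_apply, LinearMap.comp_apply,
            LinearMap.flip_apply, map_add, sub_add_eq_sub_sub] using this) c
      simpa [LinearMap.sub_apply, LinearMap.add_apply, LinearMap.comp_apply,
        LinearMap.flip_apply, map_add, sub_add_eq_sub_sub] using this
    -- generalize the second argument
    have q2 : ∀ (l : Fin n) (b c : A),
        ϖ (mul (f l) b) c - ϖ (mul (f l) c + mul c (f l)) b + ϖ (mul c b) (f l) = 0 := by
      intro l b c
      have := vanish ((ϖ.flip c).comp (mul (f l))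
          - ϖ (mul (f l) c + mul c (f l))
          + (ϖ.flip (f l)).comp (mul c))
        (fun m => by
          have := q1 l m c
          simpa [LinearMap.sub_apply, LinearMap.add_apply, LinearMap.comp_apply,
            LinearMap.flip_apply] using this) b
      simpa [LinearMap.sub_apply, LinearMap.add_apply, LinearMap.comp_apply,
        LinearMap.flip_apply] using this
    -- generalize the first argument
    intro a₁ a₂ a₃
    have := vanish ((ϖ.flip a₃).comp (mul.flip a₂)
        - (ϖ.flip a₂).comp (mul.flip a₃ + mul a₃)
        + ϖ (mul a₃ a₂))
      (fun l => by
        have := q2 l a₂ a₃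
        simpa [LinearMap.sub_apply, LinearMap.add_apply, LinearMap.comp_apply,
          LinearMap.flip_apply, map_add] using this) a₁
    simpa [LinearMap.sub_apply, LinearMap.add_apply, LinearMap.comp_apply,
      LinearMap.flip_apply, map_add] using this
  · intro h
    constructor
    · refine (e.tensorProduct e).repr.injective (Finsupp.ext ?_)
      rintro ⟨k, l⟩
      simp only [map_sum, Finsupp.coe_finset_sum, Finset.sum_apply,
        Module.Basis.tensorProduct_repr_tmul_apply, smul_eq_mul, hcoord, hdual,
        mul_ite, ite_mul, one_mul, mul_one, zero_mul, mul_zero,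
        Finset.sum_ite_eq, Finset.sum_ite_eq', Finset.mem_univ, if_true]
      exact hsym (f l) (f k)
    · apply ((e.tensorProduct e).tensorProduct e).ext_elem
      rintro ⟨⟨k, l⟩, m⟩
      rw [map_zero, hrepr k l m]
      have h' := h (f l) (f m) (f k)
      rw [map_add, LinearMap.add_apply] at h'
      simp only [Finsupp.coe_zero, Pi.zero_apply]
      linear_combination h' + hsym (f k) (mul (f l) (f m)) + hsym (f l) (mul (f k) (f m))
        - hsym (f m) (mul (f k) (f l)) - hsym (f m) (mul (f l) (f k))
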